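/- If L(x,α,ζ) = [[ζ, αx],[α/x, ζ]] and x̂,ŷ,ẑ,x,y,z are positive reals with L(x̂,α,ζ)L(ŷ,β,ζ)L(ẑ,γ,ζ) = L(x,α,ζ)L(y,β,ζ)L(z,γ,ζ) for all ζ, then x̂ = x, ŷ = y, ẑ = z. -/

import Mathlib

open Matrix

/-- The Lax matrix `L(x,α,ζ) = [[ζ, αx],[α/x, ζ]]`. -/
noncomputable def Lax (x α ζ : ℝ) : Matrix (Fin 2) (Fin 2) ℝ :=
  !![ζ, α * x; α / x, ζ]

/-- Uniqueness of the triple factorization: if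
`L(x̂,α,ζ)L(ŷ,β,ζ)L(ẑ,γ,ζ) = L(x,α,ζ)L(y,β,ζ)L(z,γ,ζ)` for all ζ,
then `x̂ = x`, `ŷ = y`, `ẑ = z`. -/
theorem triple_factorization_unique (α β γ x y z x' y' z' : ℝ)
    (hα : 0 < α) (hβ : 0 < β) (hγ : 0 < γ)
    (hx : 0 < x) (hy : 0 < y) (hz : 0 < z)
    (hx' : 0 < x') (hy' : 0 < y') (hz' : 0 < z')
    (h : ∀ ζ : ℝ,
      Lax x' α ζ * Lax y' β ζ * Lax z' γ ζ = Lax x α ζ * Lax y β ζ * Lax z γ ζ) :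
    x' = x ∧ y' = y ∧ z' = z := by
  have h0 := h 0
  have h1 := h 1
  have e01_0 := congrFun (congrFun h0 0) 1
  have e01_1 := congrFun (congrFun h1 0) 1
  have e00_1 := congrFun (congrFun h1 0) 0
  simp [Lax, Matrix.mul_apply, Fin.sum_univ_two] at e01_0 e01_1 e00_1
  field_simp at e01_0 e01_1 e00_1
  -- P' = P : x'z'/y' = xz/y, cleared
  have eP : x' * z' * y = x * z * y' := by
    have h' : (α * β * γ) * (x' * z' * y) = (α * β * γ) * (x * z * y') := by
      linear_combination (α * β * γ) * e01_0
    exact mul_left_cancel₀ (by positivity) h'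
  -- A' = A : αx' + βy' + γz' = αx + βy + γz
  have eA : α * x' + β * y' + γ * z' = α * x + β * y + γ * z := by
    have h' : (y * y') * (α * x' + β * y' + γ * z') =
        (y * y') * (α * x + β * y + γ * z) := by
      linear_combination e01_1 - (α * β * γ) * e01_0
    exact mul_left_cancel₀ (by positivity) h'
  -- C' = C cleared
  have eC : α * β * x' * z' * y * z + α * γ * x' * y' * y * z + β * γ * y' ^ 2 * y * z
      = (α * β * x * z + α * γ * x * y + β * γ * y ^ 2) * z' * y' := by
    linear_combination e00_1
  -- z' = z
  have hzz : z' = z := by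
    have key : (γ ^ 2 * y * z + α * β * x * z + β * γ * y ^ 2 + α * γ * x * y)
        * ((z' - z) * y') = 0 := by
      linear_combination (γ * y * z * y') * eA - eC + (α * β * z) * eP
    have hK : (0:ℝ) < γ ^ 2 * y * z + α * β * x * z + β * γ * y ^ 2 + α * γ * x * y := by
      positivity
    have h2 : (z' - z) * y' = 0 := by
      rcases mul_eq_zero.1 key with hk | hk
      · exact absurd hk hK.ne'
      · exact hk
    rcases mul_eq_zero.1 h2 with hk | hk
    · linarith
    · exact absurd hk hy'.ne'
  subst hzz
  -- now x' y = x y'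
  have eXY : x' * y = x * y' := by
    have h' : z' * (x' * y) = z' * (x * y') := by linear_combination eP
    exact mul_left_cancel₀ hz'.ne' h'
  have hyy : y' = y := by
    have eS : α * x' + β * y' = α * x + β * y := by linarith
    have key : (α * x + β * y) * (y - y') = 0 := by
      linear_combination α * eXY - y * eS
    rcases mul_eq_zero.1 key with hk | hk
    · nlinarith
    · linarith
  subst hyy
  have hxx : x' = x := by
    have h' : y' * x' = y' * x := by linear_combination eXY
    exact mul_left_cancel₀ hy'.ne' h'
  exact ⟨hxx, rfl, rfl⟩
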